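/- Let K be an algebraically closed field and f : 𝔸² → 𝔸² a dominant polynomial map with f(0,0) = (0,0). Let v be a normalized semivaluation on R = K[z₁,z₂] centered at the origin and suppose: (1) there is a constant C > 0 such that ord₀(φ) ≤ v(φ) ≤ C·ord₀(φ) for all φ ∈ R (an Izumi-type bound), and (2) there is a real number c > 0 such that v(f*φ) = c·v(φ) for all φ ∈ R. Then C⁻¹·cⁿ ≤ c(fⁿ) ≤ cⁿ for all n ≥ 1; in particular c_∞(f) = c. -/

import Mathlib

open Filter
open scoped ENNReal

/-- The maximal ideal `𝔪₀ = (z₁, z₂)` at the origin of `𝔸²`, inside `R = K[z₁,z₂]`. -/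
noncomputable def maxIdealAtOrigin (K : Type*) [Field K] :
    Ideal (MvPolynomial (Fin 2) K) :=
  Ideal.span {MvPolynomial.X 0, MvPolynomial.X 1}

/-- `ord₀(φ) = max {k ≥ 0 : φ ∈ 𝔪₀ᵏ}`, with `ord₀(0) = +∞`. -/
noncomputable def ord0 {K : Type*} [Field K] (φ : MvPolynomial (Fin 2) K) : ℕ∞ :=
  ⨆ k ∈ {k : ℕ | φ ∈ (maxIdealAtOrigin K) ^ k}, (k : ℕ∞)

/-- `c(fⁿ) = min(ord₀((fⁿ)₁), ord₀((fⁿ)₂))`, where the polynomial map `f : 𝔸² → 𝔸²`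
is encoded by its pullback `σ = f*`. -/
noncomputable def cSeq {K : Type*} [Field K]
    (σ : MvPolynomial (Fin 2) K →ₐ[K] MvPolynomial (Fin 2) K) (n : ℕ) : ℕ :=
  min ((ord0 ((⇑σ)^[n] (MvPolynomial.X 0))).toNat)
      ((ord0 ((⇑σ)^[n] (MvPolynomial.X 1))).toNat)

/-- A normalized semivaluation on `R = K[z₁,z₂]` centered at the origin: a function
`v : R → [0,+∞]` with `v(φψ) = v(φ)+v(ψ)`, `v(φ+ψ) ≥ min(v(φ),v(ψ))`, `v ≡ 0` on `K^×`,
`v(0) = +∞` and `min(v(z₁), v(z₂)) = 1`. -/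
def IsSemivalAtOrigin {K : Type*} [Field K] (v : MvPolynomial (Fin 2) K → ℝ≥0∞) : Prop :=
  (∀ φ ψ, v (φ * ψ) = v φ + v ψ) ∧
  (∀ φ ψ, min (v φ) (v ψ) ≤ v (φ + ψ)) ∧
  (∀ c : K, c ≠ 0 → v (MvPolynomial.C c) = 0) ∧
  v 0 = ⊤ ∧
  min (v (MvPolynomial.X 0)) (v (MvPolynomial.X 1)) = 1

lemma maxIdeal_ne_top (K : Type*) [Field K] : maxIdealAtOrigin K ≠ ⊤ := by
  intro h
  have hle : maxIdealAtOrigin K ≤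
      RingHom.ker (MvPolynomial.constantCoeff (R := K)) := by
    rw [maxIdealAtOrigin, Ideal.span_le]
    rintro x hx
    simp only [Set.mem_insert_iff, Set.mem_singleton_iff] at hx
    rcases hx with rfl | rfl <;> simp [RingHom.mem_ker]
  have h1 : (1 : MvPolynomial (Fin 2) K) ∈ RingHom.ker (MvPolynomial.constantCoeff (R := K)) :=
    hle (h ▸ Submodule.mem_top)
  simp [RingHom.mem_ker] at h1

lemma ord0_ne_top {K : Type*} [Field K] {φ : MvPolynomial (Fin 2) K} (hφ : φ ≠ 0) :
    ord0 φ ≠ ⊤ := by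
  intro h
  have hall : ∀ k : ℕ, φ ∈ (maxIdealAtOrigin K) ^ k := by
    intro k
    have hk : (k : ℕ∞) < ord0 φ := h ▸ ENat.coe_lt_top k
    rw [ord0, lt_iSup_iff] at hk
    obtain ⟨k', hk'⟩ := hk
    rw [lt_iSup_iff] at hk'
    obtain ⟨hmem, hlt⟩ := hk'
    exact Ideal.pow_le_pow_right (le_of_lt (by exact_mod_cast hlt)) hmem
  have : φ ∈ (⊥ : Ideal (MvPolynomial (Fin 2) K)) := by
    rw [← Ideal.iInf_pow_eq_bot_of_isDomain (maxIdealAtOrigin K) (maxIdeal_ne_top K)]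
    exact Ideal.mem_iInf.mpr hall
  exact hφ (Ideal.mem_bot.mp this)

lemma ord0_cast {K : Type*} [Field K] {φ : MvPolynomial (Fin 2) K} (hφ : φ ≠ 0) :
    ((ord0 φ : ℝ≥0∞)) = (((ord0 φ).toNat : ℕ) : ℝ≥0∞) := by
  have h := ord0_ne_top hφ
  generalize ord0 φ = o at h ⊢
  lift o to ℕ using h
  simp

/-- If a normalized semivaluation `v` centered at the origin satisfies an Izumi-type bound
`ord₀ ≤ v ≤ C·ord₀` and is an eigenvaluation, `v ∘ f* = c·v` with `c > 0`, then
`C⁻¹·cⁿ ≤ c(fⁿ) ≤ cⁿ` for all `n ≥ 1`; in particular `c_∞(f) = c`. -/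
theorem bounds_from_eigenvaluation {K : Type*} [Field K] [IsAlgClosed K]
    (σ : MvPolynomial (Fin 2) K →ₐ[K] MvPolynomial (Fin 2) K)
    (hdom : Function.Injective σ)
    (hfix0 : MvPolynomial.eval (0 : Fin 2 → K) (σ (MvPolynomial.X 0)) = 0)
    (hfix1 : MvPolynomial.eval (0 : Fin 2 → K) (σ (MvPolynomial.X 1)) = 0)
    (v : MvPolynomial (Fin 2) K → ℝ≥0∞) (hv : IsSemivalAtOrigin v)
    (C : ℝ) (hC : 0 < C)
    (hIzumi : ∀ φ : MvPolynomial (Fin 2) K,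
      (ord0 φ : ℝ≥0∞) ≤ v φ ∧ v φ ≤ ENNReal.ofReal C * (ord0 φ : ℝ≥0∞))
    (c : ℝ) (hc : 0 < c)
    (heigen : ∀ φ : MvPolynomial (Fin 2) K, v (σ φ) = ENNReal.ofReal c * v φ) :
    (∀ n : ℕ, 1 ≤ n → C⁻¹ * c ^ n ≤ (cSeq σ n : ℝ) ∧ (cSeq σ n : ℝ) ≤ c ^ n) ∧
    Tendsto (fun n : ℕ => (cSeq σ n : ℝ) ^ (n : ℝ)⁻¹) atTop (nhds c) := by
  obtain ⟨hmul, hadd, hconst, hzero, hnorm⟩ := hv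
  have hge : ∀ i : Fin 2, 1 ≤ v (MvPolynomial.X i) := by
    intro i
    fin_cases i
    · exact le_trans hnorm.symm.le (min_le_left _ _)
    · exact le_trans hnorm.symm.le (min_le_right _ _)
  obtain ⟨j, hj⟩ : ∃ j : Fin 2, v (MvPolynomial.X j) = 1 := by
    rcases le_total (v (MvPolynomial.X 0)) (v (MvPolynomial.X 1)) with h | h
    · exact ⟨0, by rw [← hnorm, min_eq_left h]⟩
    · exact ⟨1, by rw [← hnorm, min_eq_right h]⟩
  have hiter : ∀ (n : ℕ) (ψ : MvPolynomial (Fin 2) K),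
      v ((⇑σ)^[n] ψ) = (ENNReal.ofReal c) ^ n * v ψ := by
    intro n
    induction n with
    | zero => intro ψ; simp
    | succ n ih =>
        intro ψ
        rw [Function.iterate_succ_apply', heigen, ih, pow_succ, mul_assoc]
        ring
  have hne : ∀ (n : ℕ) (i : Fin 2), (⇑σ)^[n] (MvPolynomial.X i) ≠ (0 : MvPolynomial (Fin 2) K) := by
    intro n i h
    have h0 : (⇑σ)^[n] (0 : MvPolynomial (Fin 2) K) = 0 := Function.iterate_fixed (map_zero σ) n
    exact MvPolynomial.X_ne_zero i (Function.Injective.iterate hdom n (h.trans h0.symm))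
  have hlow : ∀ (n : ℕ) (i : Fin 2),
      C⁻¹ * c ^ n ≤ (((ord0 ((⇑σ)^[n] (MvPolynomial.X i))).toNat : ℕ) : ℝ) := by
    intro n i
    set m : ℕ := (ord0 ((⇑σ)^[n] (MvPolynomial.X i))).toNat with hm
    have h1 : ENNReal.ofReal (c ^ n) ≤ ENNReal.ofReal (C * m) := by
      calc ENNReal.ofReal (c ^ n) = (ENNReal.ofReal c) ^ n * 1 := by
            rw [ENNReal.ofReal_pow hc.le, mul_one]
        _ ≤ (ENNReal.ofReal c) ^ n * v (MvPolynomial.X i) := by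
            exact mul_le_mul_right (hge i) _
        _ = v ((⇑σ)^[n] (MvPolynomial.X i)) := (hiter n _).symm
        _ ≤ ENNReal.ofReal C * (ord0 ((⇑σ)^[n] (MvPolynomial.X i)) : ℝ≥0∞) := (hIzumi _).2
        _ = ENNReal.ofReal C * ENNReal.ofReal (m : ℝ) := by
            rw [ord0_cast (hne n i), ← hm, ENNReal.ofReal_natCast]
        _ = ENNReal.ofReal (C * m) := by rw [← ENNReal.ofReal_mul hC.le]
    have h2 : c ^ n ≤ C * m := (ENNReal.ofReal_le_ofReal_iff (by positivity)).mp h1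
    have h3 : C⁻¹ * c ^ n ≤ C⁻¹ * (C * m) :=
      mul_le_mul_of_nonneg_left h2 (inv_nonneg.mpr hC.le)
    calc C⁻¹ * c ^ n ≤ C⁻¹ * (C * m) := h3
      _ = (m : ℝ) := by rw [← mul_assoc, inv_mul_cancel₀ hC.ne', one_mul]
  have hup : ∀ n : ℕ, (((ord0 ((⇑σ)^[n] (MvPolynomial.X j))).toNat : ℕ) : ℝ) ≤ c ^ n := by
    intro n
    have h1 : (((ord0 ((⇑σ)^[n] (MvPolynomial.X j))).toNat : ℕ) : ℝ≥0∞) ≤ ENNReal.ofReal (c ^ n) := by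
      rw [← ord0_cast (hne n j)]
      calc (ord0 ((⇑σ)^[n] (MvPolynomial.X j)) : ℝ≥0∞) ≤ v ((⇑σ)^[n] (MvPolynomial.X j)) :=
            (hIzumi _).1
        _ = (ENNReal.ofReal c) ^ n * 1 := by rw [hiter, hj]
        _ = ENNReal.ofReal (c ^ n) := by rw [mul_one, ← ENNReal.ofReal_pow hc.le]
    rw [← ENNReal.ofReal_natCast] at h1
    exact (ENNReal.ofReal_le_ofReal_iff (by positivity)).mp h1
  have hbound : ∀ n : ℕ, C⁻¹ * c ^ n ≤ (cSeq σ n : ℝ) ∧ (cSeq σ n : ℝ) ≤ c ^ n := by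
    intro n
    have hmin : (cSeq σ n : ℝ) =
        min (((ord0 ((⇑σ)^[n] (MvPolynomial.X 0))).toNat : ℕ) : ℝ)
            (((ord0 ((⇑σ)^[n] (MvPolynomial.X 1))).toNat : ℕ) : ℝ) := by
      rw [cSeq]; push_cast; ring_nf
    constructor
    · rw [hmin]; exact le_min (hlow n 0) (hlow n 1)
    · refine le_trans ?_ (hup n)
      rw [hmin]
      fin_cases j
      · exact min_le_left _ _
      · exact min_le_right _ _
  constructor
  · exact fun n _ => hbound n
  · have hg : Tendsto (fun n : ℕ => (C : ℝ)⁻¹ ^ ((n : ℝ)⁻¹) * c) atTop (nhds c) := by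
      have hCpos : (0 : ℝ) < C⁻¹ := inv_pos.mpr hC
      have h1 : Tendsto (fun n : ℕ => (C : ℝ)⁻¹ ^ ((n : ℝ)⁻¹)) atTop (nhds 1) := by
        have heq : ∀ n : ℕ, (C : ℝ)⁻¹ ^ ((n : ℝ)⁻¹) = Real.exp (Real.log C⁻¹ * (n : ℝ)⁻¹) :=
          fun n => Real.rpow_def_of_pos hCpos _
        have h2 : Tendsto (fun n : ℕ => Real.log C⁻¹ * (n : ℝ)⁻¹) atTop (nhds 0) := by
          simpa using (tendsto_inv_atTop_nhds_zero_nat).const_mul (Real.log C⁻¹)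
        have h3 := (Real.continuous_exp.tendsto 0).comp h2
        simp only [Function.comp, Real.exp_zero] at h3
        simpa only [heq, Function.comp_def] using h3
      simpa using h1.mul_const c
    refine tendsto_of_tendsto_of_tendsto_of_le_of_le' hg tendsto_const_nhds ?_ ?_
    · filter_upwards [eventually_ge_atTop 1] with n hn
      have hb := (hbound n).1
      have hn0 : ((n : ℝ)) ≠ 0 := by positivity
      have key : (C : ℝ)⁻¹ ^ ((n : ℝ)⁻¹) * c = (C⁻¹ * c ^ n) ^ ((n : ℝ)⁻¹) := by
        rw [Real.mul_rpow (inv_nonneg.mpr hC.le) (by positivity)]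
        congr 1
        rw [← Real.rpow_natCast c n, ← Real.rpow_mul hc.le, mul_inv_cancel₀ hn0, Real.rpow_one]
      rw [key]
      exact Real.rpow_le_rpow (by positivity) hb (by positivity)
    · filter_upwards [eventually_ge_atTop 1] with n hn
      have hb := (hbound n).2
      have hn0 : ((n : ℝ)) ≠ 0 := by positivity
      have key : ((c : ℝ) ^ n) ^ ((n : ℝ)⁻¹) = c := by
        rw [← Real.rpow_natCast c n, ← Real.rpow_mul hc.le, mul_inv_cancel₀ hn0, Real.rpow_one]
      calc (cSeq σ n : ℝ) ^ ((n : ℝ)⁻¹) ≤ ((c : ℝ) ^ n) ^ ((n : ℝ)⁻¹) :=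
            Real.rpow_le_rpow (by positivity) hb (by positivity)
        _ = c := key
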